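/- If κ is an infinite cardinal with cof([κ]^ℵ₀) = κ, then cof([κ⁺]^ℵ₀) = κ⁺, where κ⁺ is the cardinal successor of κ. -/

import Mathlib

open Set Filter

universe u

/-- Least cardinality of a cofinal subset of a preorder. -/
noncomputable def poCof (α : Type u) [Preorder α] : Cardinal.{u} :=
  sInf { c | ∃ S : Set α, (∀ a : α, ∃ b ∈ S, a ≤ b) ∧ Cardinal.mk S = c }

/-- `cof([X]^ℵ₀)`: cofinality of the family of countably infinite subsets of `X`,
ordered by inclusion. -/
noncomputable def ctblCof (X : Type u) : Cardinal.{u} :=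
  poCof { A : Set X // A.Countable ∧ A.Infinite }

/-- The dominating number 𝔡. -/
noncomputable def dNum : Cardinal :=
  sInf { c | ∃ D : Set (ℕ → ℕ),
    (∀ f : ℕ → ℕ, ∃ g ∈ D, ∀ᶠ n in atTop, f n ≤ g n) ∧ Cardinal.mk D = c }

/-- The unbounding number 𝔟. -/
noncomputable def bNum : Cardinal :=
  sInf { c | ∃ B : Set (ℕ → ℕ),
    (∀ g : ℕ → ℕ, ∃ f ∈ B, ¬ ∀ᶠ n in atTop, f n ≤ g n) ∧ Cardinal.mk B = c }

/-- An almost disjoint family on ℕ. -/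
def AlmostDisjoint (𝒜 : Set (Set ℕ)) : Prop :=
  (∀ A ∈ 𝒜, A.Infinite) ∧ ∀ A ∈ 𝒜, ∀ B ∈ 𝒜, A ≠ B → (A ∩ B).Finite

/-- The underlying set of the Isbell–Mrówka space `Ψ(𝒜) = ℕ ∪ 𝒜`. -/
abbrev PsiSpace (𝒜 : Set (Set ℕ)) : Type := ℕ ⊕ ↥𝒜

/-- The Isbell–Mrówka topology: naturals are isolated, and basic neighborhoods
of `A ∈ 𝒜` are `{A} ∪ (A \ F)` for finite `F`. -/
instance psiTop (𝒜 : Set (Set ℕ)) : TopologicalSpace (PsiSpace 𝒜) where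
  IsOpen U := ∀ A : 𝒜, Sum.inr A ∈ U → { n : ℕ | n ∈ (A : Set ℕ) ∧ Sum.inl n ∉ U }.Finite
  isOpen_univ := by
    intro A _
    convert Set.finite_empty using 1
    ext n; simp
  isOpen_inter := by
    intro U V hU hV A hA
    apply ((hU A hA.1).union (hV A hA.2)).subset
    rintro n ⟨h1, h2⟩
    by_cases h : Sum.inl n ∈ U
    · exact Or.inr ⟨h1, fun hv => h2 ⟨h, hv⟩⟩
    · exact Or.inl ⟨h1, h⟩
  isOpen_sUnion := by
    intro s hs A hA
    obtain ⟨t, ht, hAt⟩ := hA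
    apply (hs t ht A hAt).subset
    rintro n ⟨h1, h2⟩
    exact ⟨h1, fun h => h2 ⟨t, ht, h⟩⟩

/-- `st(S, 𝒰) = ⋃ {U ∈ 𝒰 : U ∩ S ≠ ∅}`. -/
def starSet {X : Type*} (S : Set X) (𝒰 : Set (Set X)) : Set X :=
  ⋃₀ { U ∈ 𝒰 | (U ∩ S).Nonempty }

def StarMenger (X : Type*) [TopologicalSpace X] : Prop :=
  ∀ 𝒰 : ℕ → Set (Set X), (∀ n, ∀ U ∈ 𝒰 n, IsOpen U) → (∀ n, ⋃₀ 𝒰 n = univ) →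
    ∃ ℱ : ℕ → Set (Set X), (∀ n, ℱ n ⊆ 𝒰 n ∧ (ℱ n).Finite) ∧
      (⋃ n, starSet (⋃₀ ℱ n) (𝒰 n)) = univ

def StarHurewicz (X : Type*) [TopologicalSpace X] : Prop :=
  ∀ 𝒰 : ℕ → Set (Set X), (∀ n, ∀ U ∈ 𝒰 n, IsOpen U) → (∀ n, ⋃₀ 𝒰 n = univ) →
    ∃ ℱ : ℕ → Set (Set X), (∀ n, ℱ n ⊆ 𝒰 n ∧ (ℱ n).Finite) ∧
      ∀ x : X, ∀ᶠ n in atTop, x ∈ starSet (⋃₀ ℱ n) (𝒰 n)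

def StarRothberger (X : Type*) [TopologicalSpace X] : Prop :=
  ∀ 𝒰 : ℕ → Set (Set X), (∀ n, ∀ U ∈ 𝒰 n, IsOpen U) → (∀ n, ⋃₀ 𝒰 n = univ) →
    ∃ U : ℕ → Set X, (∀ n, U n ∈ 𝒰 n) ∧ (⋃ n, starSet (U n) (𝒰 n)) = univ

def StronglyStarMenger (X : Type*) [TopologicalSpace X] : Prop :=
  ∀ 𝒰 : ℕ → Set (Set X), (∀ n, ∀ U ∈ 𝒰 n, IsOpen U) → (∀ n, ⋃₀ 𝒰 n = univ) →
    ∃ F : ℕ → Set X, (∀ n, (F n).Finite) ∧ (⋃ n, starSet (F n) (𝒰 n)) = univ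

def StronglyStarHurewicz (X : Type*) [TopologicalSpace X] : Prop :=
  ∀ 𝒰 : ℕ → Set (Set X), (∀ n, ∀ U ∈ 𝒰 n, IsOpen U) → (∀ n, ⋃₀ 𝒰 n = univ) →
    ∃ F : ℕ → Set X, (∀ n, (F n).Finite) ∧
      ∀ x : X, ∀ᶠ n in atTop, x ∈ starSet (F n) (𝒰 n)

namespace CtblCofProof
open Cardinal

abbrev CI (X : Type u) := {A : Set X // A.Countable ∧ A.Infinite}

def IsCof {X : Type u} (S : Set (CI X)) : Prop := ∀ a : CI X, ∃ b ∈ S, a ≤ b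

lemma setOf_nonempty (X : Type u) :
    {c | ∃ S : Set (CI X), IsCof S ∧ #(↥S) = c}.Nonempty :=
  ⟨_, Set.univ, fun a => ⟨a, Set.mem_univ _, le_rfl⟩, rfl⟩

lemma ctblCof_eq (X : Type u) :
    ctblCof X = sInf {c | ∃ S : Set (CI X), IsCof S ∧ #(↥S) = c} := rfl

lemma exists_cofinal (X : Type u) : ∃ S : Set (CI X), IsCof S ∧ #(↥S) = ctblCof X :=
  csInf_mem (setOf_nonempty X)

lemma ctblCof_le {X : Type u} {S : Set (CI X)} (hS : IsCof S) : ctblCof X ≤ #(↥S) :=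
  csInf_le' ⟨S, hS, rfl⟩

lemma le_ctblCof {X : Type u} {c : Cardinal.{u}}
    (h : ∀ S : Set (CI X), IsCof S → c ≤ #(↥S)) : c ≤ ctblCof X := by
  rw [ctblCof_eq]
  refine le_csInf (setOf_nonempty X) ?_
  rintro d ⟨S, hS, rfl⟩
  exact h S hS

/-- Lower bound: any cofinal family covers `X`. -/
lemma mk_le_of_cofinal {X : Type u} [Infinite X] {S : Set (CI X)} (hS : IsCof S) :
    Cardinal.mk X ≤ max #(↥S) ℵ₀ := by
  have hcov : ∀ x : X, ∃ B : S, x ∈ ((B : CI X) : Set X) := by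
    intro x
    set f := Infinite.natEmbedding X
    have hinf : (insert x (Set.range f) : Set X).Infinite :=
      (Set.infinite_range_of_injective f.injective).mono (Set.subset_insert _ _)
    have hct : (insert x (Set.range f) : Set X).Countable :=
      (Set.countable_range f).insert x
    obtain ⟨B, hB, hle⟩ := hS ⟨insert x (Set.range f), hct, hinf⟩
    exact ⟨⟨B, hB⟩, hle (Set.mem_insert _ _)⟩
  have hU : (Set.univ : Set X) ⊆ ⋃ B : S, ((B : CI X) : Set X) := by
    intro x _
    obtain ⟨B, hB⟩ := hcov x
    exact Set.mem_iUnion.2 ⟨B, hB⟩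
  calc #X = #(Set.univ : Set X) := Cardinal.mk_univ.symm
    _ ≤ #(⋃ B : S, ((B : CI X) : Set X)) := Cardinal.mk_le_mk_of_subset hU
    _ ≤ #(↥S) * ⨆ B : S, #((B : CI X) : Set X) := Cardinal.mk_iUnion_le _
    _ ≤ #(↥S) * ℵ₀ := by
        refine mul_le_mul_right ?_ _
        have hne : Nonempty ↥S := by
          obtain ⟨B, hB⟩ := hcov (Classical.arbitrary X)
          exact ⟨B⟩
        refine ciSup_le' fun B => ?_
        have : Countable ((B : CI X) : Set X) := (B : CI X).2.1.to_subtype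
        exact Cardinal.mk_le_aleph0
    _ ≤ max (max #(↥S) ℵ₀) ℵ₀ := Cardinal.mul_le_max _ _
    _ = max #(↥S) ℵ₀ := by rw [max_assoc, max_self]

/-- Transfer a cofinal family along an injection. -/
lemma transfer {Y Z : Type u} (f : Y ↪ Z) {S : Set (CI Z)} (hS : IsCof S) :
    ∃ S' : Set (CI Y), IsCof S' ∧ #(↥S') ≤ #(↥S) := by
  refine ⟨{A : CI Y | ∃ B : S, (A : Set Y) = f ⁻¹' ((B : CI Z) : Set Z)}, ?_, ?_⟩
  · intro A
    have himg : (f '' (A : Set Y)).Countable := A.2.1.image f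
    have himg' : (f '' (A : Set Y)).Infinite := A.2.2.image f.injective.injOn
    obtain ⟨B, hB, hle⟩ := hS ⟨f '' (A : Set Y), himg, himg'⟩
    have hct : (f ⁻¹' (B : Set Z)).Countable := B.2.1.preimage f.injective
    have hsub : (A : Set Y) ⊆ f ⁻¹' (B : Set Z) := fun y hy => hle ⟨y, hy, rfl⟩
    exact ⟨⟨f ⁻¹' (B : Set Z), hct, A.2.2.mono hsub⟩, ⟨⟨B, hB⟩, rfl⟩, hsub⟩
  · have hinj : Function.Injective
        (fun A : {A : CI Y | ∃ B : S, (A : Set Y) = f ⁻¹' ((B : CI Z) : Set Z)} =>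
          (Classical.choose A.2 : S)) := by
      intro A₁ A₂ h
      have h₁ := Classical.choose_spec A₁.2
      have h₂ := Classical.choose_spec A₂.2
      have h' : (Classical.choose A₁.2 : S) = Classical.choose A₂.2 := h
      apply Subtype.ext; apply Subtype.ext
      rw [h₁, h₂, h']
    exact Cardinal.mk_le_of_injective hinj


lemma bounded_of_countable {κ : Cardinal.{0}} (hκ : ℵ₀ ≤ κ)
    {A : Set (Order.succ κ).ord.ToType} (hA : A.Countable) :
    ∃ α, ∀ x ∈ A, x ≤ α := by
  by_contra hb
  push_neg at hb
  have hub : Set.Unbounded (· < ·) A := by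
    intro α
    obtain ⟨x, hx, hlt⟩ := hb α
    exact ⟨x, hx, asymm hlt⟩
  haveI : IsWellOrder (Order.succ κ).ord.ToType (· < ·) := isWellOrder_lt
  have h1 := Ordinal.cof_type_le (s := A) fun a => let ⟨x, hx, hnl⟩ := hub a; ⟨x, hx, not_lt.1 hnl⟩
  rw [Ordinal.cof_toType, (Cardinal.isRegular_succ hκ).cof_eq] at h1
  have h2 : #(↥A) ≤ ℵ₀ := Cardinal.mk_le_aleph0_iff.mpr hA.to_subtype
  exact absurd (h1.trans h2) (not_le.2 (hκ.trans_lt (Order.lt_succ κ)))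

end CtblCofProof

/-- fixed points of `κ ↦ cof([κ]^ℵ₀)` are preserved by cardinal successor. -/
theorem ctblCof_succ (κ : Cardinal.{0}) (hκ : Cardinal.aleph0 ≤ κ)
    (h : ctblCof (Quotient.out κ) = κ) :
    ctblCof (Quotient.out (Order.succ κ : Cardinal.{0})) = Order.succ κ := by
  classical
  open CtblCofProof Cardinal in
  set X := Quotient.out (Order.succ κ : Cardinal.{0}) with hX
  have hmkX : #X = Order.succ κ := Cardinal.mk_out _
  have haleph : ℵ₀ < Order.succ κ := hκ.trans_lt (Order.lt_succ κ)
  have hinfX : Infinite X := Cardinal.infinite_iff.mpr (by rw [hmkX]; exact haleph.le)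
  -- lower bound
  have hlow : Order.succ κ ≤ ctblCof X := by
    refine le_ctblCof fun S hS => ?_
    have hle := mk_le_of_cofinal hS
    rw [hmkX] at hle
    rcases le_max_iff.1 hle with h' | h'
    · exact h'
    · exact absurd h' (not_le.2 haleph)
  -- upper bound
  set o := (Order.succ κ).ord with ho
  have hmkT : #o.ToType = Order.succ κ := by rw [ho, Cardinal.mk_ord_toType]
  obtain ⟨S₀, hS₀, hmkS₀⟩ := exists_cofinal (Quotient.out κ)
  rw [h] at hmkS₀
  have hIic : ∀ α : o.ToType, #(Set.Iic α) ≤ κ := by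
    intro α
    have h1 : #(Set.Iio α) ≤ κ :=
      Order.lt_succ_iff.1 (Cardinal.mk_Iio_ord_toType α)
    have h2 : #(Set.Iic α) ≤ #(Set.Iio α) + 1 := by
      rw [← Set.Iio_insert]; exact Cardinal.mk_insert_le
    have h3 : (1 : Cardinal) ≤ κ := le_trans Cardinal.one_le_aleph0 hκ
    calc #(Set.Iic α) ≤ #(Set.Iio α) + 1 := h2
      _ ≤ κ + κ := add_le_add h1 h3
      _ = κ := Cardinal.add_eq_self hκ
  have hfam : ∀ α : o.ToType, ∃ S' : Set (CI ↥(Set.Iic α)), IsCof S' ∧ #(↥S') ≤ κ := by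
    intro α
    have hle : #(↥(Set.Iic α)) ≤ #(Quotient.out κ) := by
      rw [Cardinal.mk_out]; exact hIic α
    obtain ⟨fα⟩ := (Cardinal.le_def _ _).1 hle
    obtain ⟨S', hS', hmk⟩ := transfer fα hS₀
    exact ⟨S', hS', hmk.trans_eq hmkS₀⟩
  choose Sα hSα hmkSα using hfam
  have upmem : ∀ (α : o.ToType) (A : CI ↥(Set.Iic α)),
      (Subtype.val '' A.1 : Set o.ToType).Countable ∧ (Subtype.val '' A.1 : Set o.ToType).Infinite :=
    fun α A => ⟨A.2.1.image _, A.2.2.image Subtype.val_injective.injOn⟩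
  set up : ∀ α : o.ToType, CI ↥(Set.Iic α) → CI o.ToType := fun α A =>
    ⟨Subtype.val '' A.1, upmem α A⟩ with hup
  set 𝒯 : Set (CI o.ToType) := ⋃ α, up α '' (Sα α) with h𝒯
  have h𝒯cof : IsCof 𝒯 := by
    intro A
    obtain ⟨α, hα⟩ := bounded_of_countable hκ A.2.1
    set A' : Set ↥(Set.Iic α) := Subtype.val ⁻¹' A.1 with hA'
    have himg : Subtype.val '' A' = A.1 := by
      rw [hA', Set.image_preimage_eq_inter_range, Subtype.range_coe]
      exact Set.inter_eq_left.2 fun x hx => hα x hx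
    have hA'inf : A'.Infinite := fun hfin => A.2.2 (himg ▸ hfin.image Subtype.val)
    obtain ⟨B, hB, hle⟩ := hSα α ⟨A', A.2.1.preimage Subtype.val_injective, hA'inf⟩
    refine ⟨up α B, Set.mem_iUnion.2 ⟨α, Set.mem_image_of_mem _ hB⟩, ?_⟩
    show A.1 ⊆ (up α B).1
    calc A.1 = Subtype.val '' A' := himg.symm
      _ ⊆ Subtype.val '' B.1 := Set.image_mono hle
  have hne : Nonempty o.ToType :=
    Cardinal.mk_ne_zero_iff.1 (by rw [hmkT]; exact ne_of_gt (lt_trans Cardinal.aleph0_pos haleph))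
  have h𝒯card : #(↥𝒯) ≤ Order.succ κ := by
    have h2 : (⨆ α, #(↥(up α '' Sα α))) ≤ κ :=
      ciSup_le' fun α => Cardinal.mk_image_le.trans (hmkSα α)
    calc #(↥𝒯) ≤ #o.ToType * ⨆ α, #(↥(up α '' Sα α)) := Cardinal.mk_iUnion_le _
      _ ≤ #o.ToType * κ := mul_le_mul_right h2 _
      _ = Order.succ κ * κ := by rw [hmkT]
      _ = Order.succ κ := by
          rw [Cardinal.mul_eq_max haleph.le hκ, max_eq_left (Order.le_succ κ)]
  have hXle : #X ≤ #o.ToType := by rw [hmkX, hmkT]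
  obtain ⟨e⟩ := (Cardinal.le_def _ _).1 hXle
  obtain ⟨S', hS', hmk'⟩ := transfer e h𝒯cof
  exact le_antisymm ((ctblCof_le hS').trans (hmk'.trans h𝒯card)) hlow
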